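/- Lemma 7: let Φ = cl(ψ) for some formula ψ, let Λ be a maximal consistent set in Φ, let θ ∈ Θ, and suppose C_θφ ∈ Φ and Γ ∈ W*_Λ. Then C_θφ ∈ Γ if and only if every (C_θ)_Λ-path from Γ is both a φ-path and a C_θφ-path. -/

import Mathlib

namespace ALPC

/-- A chain of belief for awareness: a nonempty finite sequence of agents. -/
def Chain (G : Type) : Type := {l : List G // l ≠ []}

/-- The last agent of a chain. -/
def Chain.last {G : Type} (θ : Chain G) : G := θ.val.getLast θ.prop

/-- Concatenation of chains. -/
def Chain.append {G : Type} (θ θ' : Chain G) : Chain G :=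
  ⟨θ.val ++ θ'.val, by cases θ; cases θ'; simp_all⟩

/-- The order ⪯ on chains: the partial order generated by the conditions that
θ ⪯ θ·θ'' and that a chain with two adjacent occurrences of the same agent is
equivalent (related in both directions) to the chain with one of them removed. -/
inductive ChainLE {G : Type} : Chain G → Chain G → Prop
  | refl (θ : Chain G) : ChainLE θ θ
  | ext (θ θ'' : Chain G) : ChainLE θ (θ.append θ'')
  | dup_le (pre suf : List G) (a : G) :
      ChainLE ⟨pre ++ a :: a :: suf, by simp⟩ ⟨pre ++ a :: suf, by simp⟩
  | dup_ge (pre suf : List G) (a : G) :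
      ChainLE ⟨pre ++ a :: suf, by simp⟩ ⟨pre ++ a :: a :: suf, by simp⟩
  | trans {θ₁ θ₂ θ₃ : Chain G} : ChainLE θ₁ θ₂ → ChainLE θ₂ θ₃ → ChainLE θ₁ θ₃

/-- Formulas of the language: atoms, negation, conjunction, implicit knowledge I_i,
the operator [≈]_θ (`box`), the operator C_θ, awareness A_θ and explicit knowledge E_θ. -/
inductive Formula (P G : Type) : Type
  | atom : P → Formula P G
  | neg : Formula P G → Formula P G
  | and : Formula P G → Formula P G → Formula P G
  | K : G → Formula P G → Formula P G
  | box : Chain G → Formula P G → Formula P G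
  | C : Chain G → Formula P G → Formula P G
  | A : Chain G → Formula P G → Formula P G
  | E : Chain G → Formula P G → Formula P G

variable {P G : Type}

/-- Material implication, defined from ¬ and ∧. -/
def Formula.imp (φ ψ : Formula P G) : Formula P G := (φ.and ψ.neg).neg

/-- Biconditional. -/
def Formula.iff (φ ψ : Formula P G) : Formula P G := (φ.imp ψ).and (ψ.imp φ)

/-- At(φ): the set of atomic propositions occurring in φ. -/
def Formula.At : Formula P G → Set P
  | .atom p => {p}
  | .neg φ => φ.At
  | .and φ ψ => φ.At ∪ ψ.At
  | .K _ φ => φ.At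
  | .box _ φ => φ.At
  | .C _ φ => φ.At
  | .A _ φ => φ.At
  | .E _ φ => φ.At

/-- The set of chains occurring as operator subscripts in a formula. -/
def Formula.chains : Formula P G → Set (Chain G)
  | .atom _ => ∅
  | .neg φ => φ.chains
  | .and φ ψ => φ.chains ∪ ψ.chains
  | .K _ φ => φ.chains
  | .box θ φ => insert θ φ.chains
  | .C θ φ => insert θ φ.chains
  | .A θ φ => insert θ φ.chains
  | .E θ φ => insert θ φ.chains

/-- Well-formedness: φ belongs to the language 𝓛_(P,G,Θ); every operator subscript
is a chain in Θ, and in A_θ φ and E_θ φ every operator subscript θ' occurring in φ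
satisfies θ ⪯ θ'. -/
def WF (Θ : Set (Chain G)) : Formula P G → Prop
  | .atom _ => True
  | .neg φ => WF Θ φ
  | .and φ ψ => WF Θ φ ∧ WF Θ ψ
  | .K _ φ => WF Θ φ
  | .box θ φ => θ ∈ Θ ∧ WF Θ φ
  | .C θ φ => θ ∈ Θ ∧ WF Θ φ
  | .A θ φ => θ ∈ Θ ∧ WF Θ φ ∧ ∀ θ' ∈ φ.chains, ChainLE θ θ'
  | .E θ φ => θ ∈ Θ ∧ WF Θ φ ∧ ∀ θ' ∈ φ.chains, ChainLE θ θ'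

/-- The raw data of a Kripke-style model for the language. -/
structure RawModel (P G : Type) where
  W : Type
  sim : G → W → W → Prop
  V : P → Set W
  Aw : Chain G → Set P

/-- The indistinguishable relation ≈_θ induced by the awareness set 𝒜_θ. -/
def RawModel.indist (M : RawModel P G) (θ : Chain G) (w v : M.W) : Prop :=
  ∀ p ∈ M.Aw θ, (w ∈ M.V p ↔ v ∈ M.V p)

/-- The transitive closure of ∼_i ∘ ≈_θ (i the last agent of θ), where
(x,y) ∈ ∼_i ∘ ≈_θ iff there is u with x ≈_θ u and u ∼_i y. -/
def RawModel.creach (M : RawModel P G) (θ : Chain G) : M.W → M.W → Prop :=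
  Relation.TransGen (fun x y => ∃ u, M.indist θ x u ∧ M.sim θ.last u y)

/-- The satisfaction relation M,w ⊨ φ. -/
def Sat (M : RawModel P G) : Formula P G → M.W → Prop
  | .atom p, w => w ∈ M.V p
  | .neg φ, w => ¬ Sat M φ w
  | .and φ ψ, w => Sat M φ w ∧ Sat M ψ w
  | .K i φ, w => ∀ v, M.sim i w v → Sat M φ v
  | .box θ φ, w => ∀ v, M.indist θ w v → Sat M φ v
  | .C θ φ, w => ∀ v, M.creach θ w v → Sat M φ v
  | .A θ φ, _ => Formula.At φ ⊆ M.Aw θ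
  | .E θ φ, w => Formula.At φ ⊆ M.Aw θ ∧ ∀ v, M.creach θ w v → Sat M φ v

/-- An epistemic model with awareness: a nonempty set of worlds, equivalence
relations ∼_i, a valuation, and nonempty awareness sets 𝒜_θ (θ ∈ Θ) with
𝒜_θ ⊆ 𝒜_θ' whenever θ' ⪯ θ. -/
structure AwModel (P G : Type) (Θ : Set (Chain G)) extends RawModel P G where
  W_ne : Nonempty W
  sim_equiv : ∀ i : G, Equivalence (sim i)
  Aw_ne : ∀ θ ∈ Θ, (Aw θ).Nonempty
  Aw_mono : ∀ θ ∈ Θ, ∀ θ' ∈ Θ, ChainLE θ' θ → Aw θ ⊆ Aw θ'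

/-- Validity: φ holds at every world of every epistemic model with awareness. -/
def Valid (Θ : Set (Chain G)) (φ : Formula P G) : Prop :=
  ∀ M : AwModel P G Θ, ∀ w : M.W, Sat M.toRawModel φ w


/-- Conjunction of a nonempty list of formulas, given as head and tail. -/
def conjList (f : Formula P G) : List (Formula P G) → Formula P G
  | [] => f
  | g :: l => f.and (conjList g l)

/-- Boolean evaluation of the propositional skeleton of a formula, treating
non-Boolean formulas as propositional atoms. -/
def propEval (v : Formula P G → Bool) : Formula P G → Bool
  | .neg φ => !(propEval v φ)
  | .and φ ψ => propEval v φ && propEval v ψ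
  | φ => v φ

/-- φ is a propositional tautology. -/
def Tautology (φ : Formula P G) : Prop := ∀ v, propEval v φ = true

/-- The Hilbert system ALPC. -/
inductive Provable (Θ : Set (Chain G)) : Formula P G → Prop
  | taut {φ : Formula P G} : Tautology φ → WF Θ φ → Provable Θ φ
  | AN {θ : Chain G} {φ : Formula P G} :
      WF Θ ((Formula.A θ φ).iff (Formula.A θ φ.neg)) →
      Provable Θ ((Formula.A θ φ).iff (Formula.A θ φ.neg))
  | ACN {θ : Chain G} {φ ψ : Formula P G} :
      WF Θ ((Formula.A θ (φ.and ψ)).iff ((Formula.A θ φ).and (Formula.A θ ψ))) →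
      Provable Θ ((Formula.A θ (φ.and ψ)).iff ((Formula.A θ φ).and (Formula.A θ ψ)))
  | AA {θ θ' : Chain G} {φ : Formula P G} :
      WF Θ ((Formula.A θ φ).iff (Formula.A θ (Formula.A θ' φ))) →
      Provable Θ ((Formula.A θ φ).iff (Formula.A θ (Formula.A θ' φ)))
  | AL {θ : Chain G} {i : G} {φ : Formula P G} :
      WF Θ ((Formula.A θ φ).iff (Formula.A θ (Formula.K i φ))) →
      Provable Θ ((Formula.A θ φ).iff (Formula.A θ (Formula.K i φ)))
  | Abox {θ θ' : Chain G} {φ : Formula P G} :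
      WF Θ ((Formula.A θ φ).iff (Formula.A θ (Formula.box θ' φ))) →
      Provable Θ ((Formula.A θ φ).iff (Formula.A θ (Formula.box θ' φ)))
  | ACM {θ θ' : Chain G} {φ : Formula P G} :
      WF Θ ((Formula.A θ φ).iff (Formula.A θ (Formula.C θ' φ))) →
      Provable Θ ((Formula.A θ φ).iff (Formula.A θ (Formula.C θ' φ)))
  | AK {θ θ' : Chain G} {φ : Formula P G} :
      WF Θ ((Formula.A θ φ).iff (Formula.A θ (Formula.E θ' φ))) →
      Provable Θ ((Formula.A θ φ).iff (Formula.A θ (Formula.E θ' φ)))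
  | ANbox {θ : Chain G} {p : P} :
      WF Θ (((Formula.A θ (Formula.atom p)).and (Formula.atom p)).imp
        (Formula.box θ (Formula.atom p))) →
      Provable Θ (((Formula.A θ (Formula.atom p)).and (Formula.atom p)).imp
        (Formula.box θ (Formula.atom p)))
  | AI {θ θ' : Chain G} {φ : Formula P G} :
      ChainLE θ' θ →
      WF Θ ((Formula.A θ φ).imp (Formula.A θ' φ)) →
      Provable Θ ((Formula.A θ φ).imp (Formula.A θ' φ))
  | KA {θ : Chain G} {φ : Formula P G} (θ₀ : Chain G) (l : List (Chain G)) :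
      (∀ x, x ∈ θ₀ :: l ↔ x ∈ Θ) →
      WF Θ (Formula.A θ φ) →
      Provable Θ ((Formula.A θ φ).imp
        (conjList (Formula.C θ₀ (Formula.A θ φ))
          (l.map fun θ' => Formula.C θ' (Formula.A θ φ))))
  | NKA {θ : Chain G} {φ : Formula P G} (θ₀ : Chain G) (l : List (Chain G)) :
      (∀ x, x ∈ θ₀ :: l ↔ x ∈ Θ) →
      WF Θ (Formula.A θ φ) →
      Provable Θ (((Formula.A θ φ).neg).imp
        (conjList (Formula.C θ₀ ((Formula.A θ φ).neg))
          (l.map fun θ' => Formula.C θ' ((Formula.A θ φ).neg))))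
  | K_I {i : G} {φ ψ : Formula P G} :
      WF Θ ((Formula.K i (φ.imp ψ)).imp ((Formula.K i φ).imp (Formula.K i ψ))) →
      Provable Θ ((Formula.K i (φ.imp ψ)).imp ((Formula.K i φ).imp (Formula.K i ψ)))
  | T_I {i : G} {φ : Formula P G} :
      WF Θ ((Formula.K i φ).imp φ) →
      Provable Θ ((Formula.K i φ).imp φ)
  | five_I {i : G} {φ : Formula P G} :
      WF Θ (((Formula.K i φ).neg).imp (Formula.K i ((Formula.K i φ).neg))) →
      Provable Θ (((Formula.K i φ).neg).imp (Formula.K i ((Formula.K i φ).neg)))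
  | K_box {θ : Chain G} {φ ψ : Formula P G} :
      WF Θ ((Formula.box θ (φ.imp ψ)).imp ((Formula.box θ φ).imp (Formula.box θ ψ))) →
      Provable Θ ((Formula.box θ (φ.imp ψ)).imp ((Formula.box θ φ).imp (Formula.box θ ψ)))
  | T_box {θ : Chain G} {φ : Formula P G} :
      WF Θ ((Formula.box θ φ).imp φ) →
      Provable Θ ((Formula.box θ φ).imp φ)
  | five_box {θ : Chain G} {φ : Formula P G} :
      WF Θ (((Formula.box θ φ).neg).imp (Formula.box θ ((Formula.box θ φ).neg))) →
      Provable Θ (((Formula.box θ φ).neg).imp (Formula.box θ ((Formula.box θ φ).neg)))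
  | K_C {θ : Chain G} {φ ψ : Formula P G} :
      WF Θ ((Formula.C θ (φ.imp ψ)).imp ((Formula.C θ φ).imp (Formula.C θ ψ))) →
      Provable Θ ((Formula.C θ (φ.imp ψ)).imp ((Formula.C θ φ).imp (Formula.C θ ψ)))
  | MIX {θ : Chain G} {φ : Formula P G} :
      WF Θ ((Formula.C θ φ).imp
        (φ.and (Formula.box θ (Formula.K (Chain.last θ) (Formula.C θ φ))))) →
      Provable Θ ((Formula.C θ φ).imp
        (φ.and (Formula.box θ (Formula.K (Chain.last θ) (Formula.C θ φ)))))
  | IND {θ : Chain G} {φ : Formula P G} :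
      WF Θ ((Formula.C θ (φ.imp (Formula.box θ (Formula.K (Chain.last θ) φ)))).imp
        (φ.imp (Formula.C θ φ))) →
      Provable Θ ((Formula.C θ (φ.imp (Formula.box θ (Formula.K (Chain.last θ) φ)))).imp
        (φ.imp (Formula.C θ φ)))
  | KAC {θ : Chain G} {φ : Formula P G} :
      WF Θ ((Formula.E θ φ).iff ((Formula.A θ φ).and (Formula.C θ φ))) →
      Provable Θ ((Formula.E θ φ).iff ((Formula.A θ φ).and (Formula.C θ φ)))
  | mp {φ ψ : Formula P G} : Provable Θ (φ.imp ψ) → Provable Θ φ → Provable Θ ψ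
  | necK {i : G} {φ : Formula P G} : Provable Θ φ → Provable Θ (Formula.K i φ)
  | necBox {θ : Chain G} {φ : Formula P G} : θ ∈ Θ → Provable Θ φ → Provable Θ (Formula.box θ φ)
  | necC {θ : Chain G} {φ : Formula P G} : θ ∈ Θ → Provable Θ φ → Provable Θ (Formula.C θ φ)

/-- Γ ⊢ φ: there is a finite subset Γ' of Γ with ⊢ ⋀Γ' → φ. -/
def Deduces (Θ : Set (Chain G)) (Γ : Set (Formula P G)) (φ : Formula P G) : Prop :=
  Provable Θ φ ∨ ∃ (ψ : Formula P G) (l : List (Formula P G)),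
    ψ ∈ Γ ∧ (∀ χ ∈ l, χ ∈ Γ) ∧ Provable Θ ((conjList ψ l).imp φ)

/-- Γ ⊢ ⊥: Γ deduces a contradiction. -/
def Inconsistent (Θ : Set (Chain G)) (Γ : Set (Formula P G)) : Prop :=
  ∃ χ, Deduces Θ Γ χ ∧ Deduces Θ Γ χ.neg

/-- Γ is a consistent set in Φ. -/
def ConsistentIn (Θ : Set (Chain G)) (Φ Γ : Set (Formula P G)) : Prop :=
  Γ ⊆ Φ ∧ ¬ Inconsistent Θ Γ

/-- Γ is a maximal consistent set in Φ: no consistent set in Φ properly contains Γ. -/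
def MCSIn (Θ : Set (Chain G)) (Φ Γ : Set (Formula P G)) : Prop :=
  ConsistentIn Θ Φ Γ ∧ ∀ Δ, ConsistentIn Θ Φ Δ → Γ ⊆ Δ → Δ = Γ

/-- Subformula relation: `Subf χ φ` means χ is a subformula of φ. -/
inductive Subf : Formula P G → Formula P G → Prop
  | refl (φ : Formula P G) : Subf φ φ
  | neg {χ φ : Formula P G} : Subf χ φ → Subf χ (Formula.neg φ)
  | andL {χ φ ψ : Formula P G} : Subf χ φ → Subf χ (Formula.and φ ψ)
  | andR {χ φ ψ : Formula P G} : Subf χ ψ → Subf χ (Formula.and φ ψ)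
  | K {χ φ : Formula P G} {i : G} : Subf χ φ → Subf χ (Formula.K i φ)
  | box {χ φ : Formula P G} {θ : Chain G} : Subf χ φ → Subf χ (Formula.box θ φ)
  | C {χ φ : Formula P G} {θ : Chain G} : Subf χ φ → Subf χ (Formula.C θ φ)
  | A {χ φ : Formula P G} {θ : Chain G} : Subf χ φ → Subf χ (Formula.A θ φ)
  | E {χ φ : Formula P G} {θ : Chain G} : Subf χ φ → Subf χ (Formula.E θ φ)

/-- φ has the form of a negation. -/
def Formula.isNeg : Formula P G → Prop
  | .neg _ => True
  | _ => False

/-- The closure cl(φ), as an inductively generated (hence smallest) set. -/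
inductive InCl (Θ : Set (Chain G)) (φ : Formula P G) : Formula P G → Prop
  | self : InCl Θ φ φ
  | sub {ψ χ : Formula P G} : InCl Θ φ ψ → Subf χ ψ → InCl Θ φ χ
  | neg {ψ : Formula P G} : InCl Θ φ ψ → ¬ Formula.isNeg ψ → InCl Θ φ (Formula.neg ψ)
  | CA {θ : Chain G} {ψ : Formula P G} (θ' : Chain G) :
      InCl Θ φ (Formula.A θ ψ) → θ' ∈ Θ → InCl Θ φ (Formula.C θ' (Formula.A θ ψ))
  | CnA {θ : Chain G} {ψ : Formula P G} (θ' : Chain G) :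
      InCl Θ φ (Formula.A θ ψ) → θ' ∈ Θ →
      InCl Θ φ (Formula.C θ' (Formula.neg (Formula.A θ ψ)))
  | boxAtom {θ : Chain G} {ψ : Formula P G} {p : P} :
      InCl Θ φ (Formula.A θ ψ) → InCl Θ φ (Formula.atom p) →
      InCl Θ φ (Formula.box θ (Formula.atom p))
  | Asub {θ : Chain G} {ψ χ : Formula P G} :
      InCl Θ φ (Formula.A θ ψ) → Subf χ ψ → InCl Θ φ (Formula.A θ χ)
  | Achain {θ : Chain G} {ψ : Formula P G} (θ' : Chain G) :
      InCl Θ φ (Formula.A θ ψ) → θ' ∈ Θ → InCl Θ φ (Formula.A θ' ψ)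
  | KK {i : G} {ψ : Formula P G} :
      Subf (Formula.K i ψ) φ → InCl Θ φ (Formula.K i (Formula.K i ψ))
  | KnK {i : G} {ψ : Formula P G} :
      Subf (Formula.K i ψ) φ → InCl Θ φ (Formula.K i (Formula.neg (Formula.K i ψ)))
  | boxbox {θ : Chain G} {ψ : Formula P G} :
      Subf (Formula.box θ ψ) φ → InCl Θ φ (Formula.box θ (Formula.box θ ψ))
  | boxnbox {θ : Chain G} {ψ : Formula P G} :
      Subf (Formula.box θ ψ) φ → InCl Θ φ (Formula.box θ (Formula.neg (Formula.box θ ψ)))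
  | CboxKC {θ : Chain G} {ψ : Formula P G} :
      InCl Θ φ (Formula.C θ ψ) →
      InCl Θ φ (Formula.box θ (Formula.K (Chain.last θ) (Formula.C θ ψ)))
  | KC1 {i : G} {θ : Chain G} {ψ : Formula P G} :
      InCl Θ φ (Formula.K i (Formula.C θ ψ)) →
      InCl Θ φ (Formula.K i (Formula.K i (Formula.C θ ψ)))
  | KC2 {i : G} {θ : Chain G} {ψ : Formula P G} :
      InCl Θ φ (Formula.K i (Formula.C θ ψ)) →
      InCl Θ φ (Formula.K i (Formula.neg (Formula.K i (Formula.C θ ψ))))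
  | boxKC1 {θ : Chain G} {i : G} {ψ : Formula P G} :
      InCl Θ φ (Formula.box θ (Formula.K i (Formula.C θ ψ))) →
      InCl Θ φ (Formula.box θ (Formula.box θ (Formula.K i (Formula.C θ ψ))))
  | boxKC2 {θ : Chain G} {i : G} {ψ : Formula P G} :
      InCl Θ φ (Formula.box θ (Formula.K i (Formula.C θ ψ))) →
      InCl Θ φ (Formula.box θ (Formula.neg (Formula.box θ (Formula.K i (Formula.C θ ψ)))))
  | EA {θ : Chain G} {ψ : Formula P G} : InCl Θ φ (Formula.E θ ψ) → InCl Θ φ (Formula.A θ ψ)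
  | EC {θ : Chain G} {ψ : Formula P G} : InCl Θ φ (Formula.E θ ψ) → InCl Θ φ (Formula.C θ ψ)

/-- The closure cl(φ) as a set of formulas. -/
def cl (Θ : Set (Chain G)) (φ : Formula P G) : Set (Formula P G) := {ψ | InCl Θ φ ψ}

/-- (Γ,Δ) ∈ (∼_i)*: {χ | I_iχ ∈ Γ} ⊆ Δ. -/
def simStar (i : G) (Γ Δ : Set (Formula P G)) : Prop := ∀ χ, Formula.K i χ ∈ Γ → χ ∈ Δ

/-- (Γ,Δ) ∈ (≈_θ)*: {χ | [≈]_θχ ∈ Γ} ⊆ Δ. -/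
def boxStar (θ : Chain G) (Γ Δ : Set (Formula P G)) : Prop :=
  ∀ χ, Formula.box θ χ ∈ Γ → χ ∈ Δ

/-- The union over i ∈ G and θ ∈ Θ of the compositions (∼_i)* ∘ (≈_θ)* on
maximal consistent sets in Φ. -/
def baseRel (Θ : Set (Chain G)) (Φ : Set (Formula P G)) (X Y : Set (Formula P G)) : Prop :=
  ∃ i : G, ∃ θ ∈ Θ, ∃ U, MCSIn Θ Φ U ∧ boxStar θ X U ∧ simStar i U Y

/-- The domain W*_Λ of the divided model M*_Λ. -/
def WL (Θ : Set (Chain G)) (Φ Λ : Set (Formula P G)) : Set (Set (Formula P G)) :=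
  {Γ | MCSIn Θ Φ Γ ∧ Relation.TransGen (baseRel Θ Φ) Λ Γ}

/-- One step of a (C_θ)_Λ-path: the composition (∼_i)*_Λ ∘ (≈_θ)*_Λ
(i the last agent of θ) restricted to W*_Λ. -/
def stepL (Θ : Set (Chain G)) (Φ Λ : Set (Formula P G)) (θ : Chain G)
    (X Y : Set (Formula P G)) : Prop :=
  X ∈ WL Θ Φ Λ ∧ Y ∈ WL Θ Φ Λ ∧
    ∃ U ∈ WL Θ Φ Λ, boxStar θ X U ∧ simStar (Chain.last θ) U Y

/-- The divided model M*_Λ (as raw model data), with relations (∼_i)*_Λ,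
awareness sets (𝒜_θ)*_Λ and valuation V*_Λ. -/
def dividedModel (Θ : Set (Chain G)) (Φ Λ : Set (Formula P G)) : RawModel P G where
  W := {Γ : Set (Formula P G) // Γ ∈ WL Θ Φ Λ}
  sim i x y := simStar i x.val y.val
  V p := {x | Formula.atom p ∈ x.val}
  Aw θ := {p | ∀ Γ ∈ WL Θ Φ Λ, Formula.A θ (Formula.atom p) ∈ Γ}

/-! ### Auxiliary lemmas for Lemma 7 -/

section Aux

variable {Θ : Set (Chain G)}

lemma propEval_neg (v : Formula P G → Bool) (φ : Formula P G) :
    propEval v (Formula.neg φ) = !propEval v φ := rfl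

lemma propEval_and (v : Formula P G → Bool) (a b : Formula P G) :
    propEval v (a.and b) = (propEval v a && propEval v b) := rfl

lemma propEval_imp_true {v : Formula P G → Bool} {a b : Formula P G} :
    propEval v (Formula.imp a b) = true ↔ (propEval v a = true → propEval v b = true) := by
  show propEval v ((a.and b.neg).neg) = true ↔ _
  rw [propEval_neg, propEval_and, propEval_neg]
  cases propEval v a <;> cases propEval v b <;> simp

lemma propEval_conjList_true {v : Formula P G → Bool} {f : Formula P G}
    {l : List (Formula P G)} :
    propEval v (conjList f l) = true ↔
      propEval v f = true ∧ ∀ χ ∈ l, propEval v χ = true := by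
  induction l generalizing f with
  | nil => simp [conjList]
  | cons g t ih =>
    simp only [conjList, propEval_and, Bool.and_eq_true, ih, List.mem_cons]
    constructor
    · rintro ⟨h1, h2, h3⟩
      exact ⟨h1, fun χ h => by rcases h with rfl | h; exact h2; exact h3 χ h⟩
    · rintro ⟨h1, h2⟩
      exact ⟨h1, h2 g (Or.inl rfl), fun χ h => h2 χ (Or.inr h)⟩

lemma wf_neg {φ : Formula P G} : WF Θ (Formula.neg φ) ↔ WF Θ φ := Iff.rfl

lemma wf_and {a b : Formula P G} : WF Θ (a.and b) ↔ WF Θ a ∧ WF Θ b := Iff.rfl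

lemma wf_imp {a b : Formula P G} : WF Θ (Formula.imp a b) ↔ WF Θ a ∧ WF Θ b := Iff.rfl

lemma wf_conjList {f : Formula P G} {l : List (Formula P G)} :
    WF Θ (conjList f l) ↔ WF Θ f ∧ ∀ χ ∈ l, WF Θ χ := by
  induction l generalizing f with
  | nil => simp [conjList]
  | cons g t ih =>
    rw [conjList, wf_and, ih]
    constructor
    · rintro ⟨h1, h2, h3⟩
      exact ⟨h1, fun χ h => by rcases List.mem_cons.mp h with rfl | h; exact h2; exact h3 χ h⟩
    · rintro ⟨h1, h2⟩
      exact ⟨h1, h2 g (List.mem_cons_self), fun χ h => h2 χ (List.mem_cons_of_mem _ h)⟩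

/-- Every provable formula is well-formed. -/
lemma provable_wf {φ : Formula P G} (h : Provable Θ φ) : WF Θ φ := by
  induction h with
  | KA θ₀ l henum hwf =>
    refine wf_imp.mpr ⟨hwf, wf_conjList.mpr ⟨⟨(henum θ₀).1 (List.mem_cons_self), hwf⟩, ?_⟩⟩
    intro χ hχ
    obtain ⟨θ', hθ', rfl⟩ := List.mem_map.mp hχ
    exact ⟨(henum θ').1 (List.mem_cons_of_mem _ hθ'), hwf⟩
  | NKA θ₀ l henum hwf =>
    refine wf_imp.mpr ⟨hwf, wf_conjList.mpr ⟨⟨(henum θ₀).1 (List.mem_cons_self), hwf⟩, ?_⟩⟩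
    intro χ hχ
    obtain ⟨θ', hθ', rfl⟩ := List.mem_map.mp hχ
    exact ⟨(henum θ').1 (List.mem_cons_of_mem _ hθ'), hwf⟩
  | mp h1 h2 ih1 ih2 => exact (wf_imp.mp ih1).2
  | necK h ih => exact ih
  | necBox hθ h ih => exact ⟨hθ, ih⟩
  | necC hθ h ih => exact ⟨hθ, ih⟩
  | _ => assumption

lemma provable_imp_and_left {c a b : Formula P G}
    (h : Provable Θ (Formula.imp c (a.and b))) : Provable Θ (Formula.imp c a) := by
  have hw := wf_imp.mp (provable_wf h)
  have hab : WF Θ a ∧ WF Θ b := hw.2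
  have hT : Provable Θ ((Formula.imp c (a.and b)).imp (Formula.imp c a)) := by
    apply Provable.taut
    · intro v
      rw [propEval_imp_true]
      intro h1
      rw [propEval_imp_true] at h1 ⊢
      intro hc
      have h2 := h1 hc
      rw [propEval_and, Bool.and_eq_true] at h2
      exact h2.1
    · exact wf_imp.mpr ⟨wf_imp.mpr ⟨hw.1, hw.2⟩, wf_imp.mpr ⟨hw.1, hab.1⟩⟩
  exact Provable.mp hT h

lemma provable_imp_and_right {c a b : Formula P G}
    (h : Provable Θ (Formula.imp c (a.and b))) : Provable Θ (Formula.imp c b) := by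
  have hw := wf_imp.mp (provable_wf h)
  have hab : WF Θ a ∧ WF Θ b := hw.2
  have hT : Provable Θ ((Formula.imp c (a.and b)).imp (Formula.imp c b)) := by
    apply Provable.taut
    · intro v
      rw [propEval_imp_true]
      intro h1
      rw [propEval_imp_true] at h1 ⊢
      intro hc
      have h2 := h1 hc
      rw [propEval_and, Bool.and_eq_true] at h2
      exact h2.2
    · exact wf_imp.mpr ⟨wf_imp.mpr ⟨hw.1, hw.2⟩, wf_imp.mpr ⟨hw.1, hab.2⟩⟩
  exact Provable.mp hT h

/-- Cut: anything deducible from X ∪ {β} is deducible from X, provided some α ∈ X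
provably implies β. -/
lemma deduces_cut {X : Set (Formula P G)} {α β ξ : Formula P G}
    (hα : α ∈ X) (himp : Provable Θ (Formula.imp α β)) :
    Deduces Θ (X ∪ {β}) ξ → Deduces Θ X ξ := by
  classical
  rintro (h | ⟨ψ0, l, hψ0, hl, hpr⟩)
  · exact Or.inl h
  · right
    set f : Formula P G → Formula P G := fun χ => if χ = β then α else χ with hf
    refine ⟨α, (ψ0 :: l).map f, hα, ?_, ?_⟩
    · intro χ hχ
      obtain ⟨χ', hχ', rfl⟩ := List.mem_map.mp hχ
      have hmem : χ' ∈ X ∪ {β} := by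
        rcases List.mem_cons.mp hχ' with rfl | h
        · exact hψ0
        · exact hl χ' h
      by_cases hb : χ' = β
      · simp only [hf, if_pos hb]; exact hα
      · simp only [hf, if_neg hb]
        rcases hmem with h | h
        · exact h
        · exact absurd h hb
    · have hwα : WF Θ α := (wf_imp.mp (provable_wf himp)).1
      have hwβ : WF Θ β := (wf_imp.mp (provable_wf himp)).2
      have hw := wf_imp.mp (provable_wf hpr)
      have hwconj := wf_conjList.mp hw.1
      have hT : Provable Θ ((Formula.imp α β).imp
          (((conjList ψ0 l).imp ξ).imp ((conjList α ((ψ0 :: l).map f)).imp ξ))) := by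
        apply Provable.taut
        · intro v
          rw [propEval_imp_true]
          intro h1
          rw [propEval_imp_true] at h1 ⊢
          intro h2
          rw [propEval_imp_true] at h2 ⊢
          intro h3
          rw [propEval_conjList_true] at h3
          apply h2
          rw [propEval_conjList_true]
          have hall' : ∀ χ' ∈ ψ0 :: l, propEval v χ' = true := by
            intro χ' hχ'
            have hfχ : propEval v (f χ') = true :=
              h3.2 (f χ') (List.mem_map_of_mem (f := f) hχ')
            by_cases hb : χ' = β
            · subst hb
              exact h1 h3.1
            · simpa only [hf, if_neg hb] using hfχ
          exact ⟨hall' ψ0 (List.mem_cons_self),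
            fun χ h => hall' χ (List.mem_cons_of_mem _ h)⟩
        · refine wf_imp.mpr ⟨wf_imp.mpr ⟨hwα, hwβ⟩,
            wf_imp.mpr ⟨wf_imp.mpr ⟨hw.1, hw.2⟩,
              wf_imp.mpr ⟨wf_conjList.mpr ⟨hwα, ?_⟩, hw.2⟩⟩⟩
          intro χ hχ
          obtain ⟨χ', hχ', rfl⟩ := List.mem_map.mp hχ
          have hwχ' : WF Θ χ' := by
            rcases List.mem_cons.mp hχ' with rfl | h
            · exact hwconj.1
            · exact hwconj.2 χ' h
          by_cases hb : χ' = β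
          · simp only [hf, if_pos hb]; exact hwα
          · simp only [hf, if_neg hb]; exact hwχ'
      exact Provable.mp (Provable.mp hT himp) hpr

/-- A maximal consistent set in Φ is closed under provable implication from a member,
within Φ. -/
lemma mcs_closed {Φ X : Set (Formula P G)} (hX : MCSIn Θ Φ X) {α β : Formula P G}
    (hα : α ∈ X) (himp : Provable Θ (Formula.imp α β)) (hβ : β ∈ Φ) : β ∈ X := by
  have hcons : ConsistentIn Θ Φ (X ∪ {β}) := by
    refine ⟨Set.union_subset hX.1.1 (Set.singleton_subset_iff.mpr hβ), ?_⟩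
    rintro ⟨ξ, h1, h2⟩
    exact hX.1.2 ⟨ξ, deduces_cut hα himp h1, deduces_cut hα himp h2⟩
  have heq := hX.2 _ hcons Set.subset_union_left
  rw [← heq]
  exact Set.mem_union_right _ rfl

lemma deduces_erase_not_wf {X : Set (Formula P G)} {χ ξ : Formula P G}
    (hnwf : ¬ WF Θ χ) : Deduces Θ (X ∪ {χ}) ξ → Deduces Θ X ξ := by
  rintro (h | ⟨ψ0, l, hψ0, hl, hpr⟩)
  · exact Or.inl h
  · have hw := wf_imp.mp (provable_wf hpr)
    have hwconj := wf_conjList.mp hw.1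
    refine Or.inr ⟨ψ0, l, ?_, ?_, hpr⟩
    · rcases hψ0 with h | h
      · exact h
      · rw [Set.mem_singleton_iff] at h
        subst h
        exact absurd hwconj.1 hnwf
    · intro χ' hχ'
      rcases hl χ' hχ' with h | h
      · exact h
      · rw [Set.mem_singleton_iff] at h
        subst h
        exact absurd (hwconj.2 χ' hχ') hnwf

/-- A non-well-formed formula of Φ belongs to every maximal consistent set in Φ. -/
lemma mcs_mem_not_wf {Φ X : Set (Formula P G)} (hX : MCSIn Θ Φ X) {χ : Formula P G}
    (hχ : χ ∈ Φ) (hnwf : ¬ WF Θ χ) : χ ∈ X := by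
  have hcons : ConsistentIn Θ Φ (X ∪ {χ}) := by
    refine ⟨Set.union_subset hX.1.1 (Set.singleton_subset_iff.mpr hχ), ?_⟩
    rintro ⟨ξ, h1, h2⟩
    exact hX.1.2 ⟨ξ, deduces_erase_not_wf hnwf h1, deduces_erase_not_wf hnwf h2⟩
  have heq := hX.2 _ hcons Set.subset_union_left
  rw [← heq]
  exact Set.mem_union_right _ rfl

end Aux

/-- Lemma 7: for C_θφ ∈ Φ = cl(ψ) and Γ ∈ W*_Λ, C_θφ ∈ Γ iff every
(C_θ)_Λ-path from Γ is both a φ-path and a C_θφ-path. -/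
theorem C_mem_iff_paths {P G : Type} [Countable P] [Finite G]
    {Θ : Set (Chain G)} (hΘ : Θ.Finite) (ψ : Formula P G)
    (Φ Λ : Set (Formula P G)) (hΦ : Φ = cl Θ ψ) (hΛ : MCSIn Θ Φ Λ)
    (θ : Chain G) (hθ : θ ∈ Θ) (φ : Formula P G) (hφ : Formula.C θ φ ∈ Φ)
    (Γ : Set (Formula P G)) (hΓ : Γ ∈ WL Θ Φ Λ) :
    Formula.C θ φ ∈ Γ ↔
      ∀ rest : List (Set (Formula P G)), List.Chain (stepL Θ Φ Λ θ) Γ rest →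
        (∀ X ∈ Γ :: rest, φ ∈ X) ∧ (∀ X ∈ Γ :: rest, Formula.C θ φ ∈ X) := by
  -- membership facts in Φ, from the closure
  have hφcl : InCl Θ ψ (Formula.C θ φ) := by rw [hΦ] at hφ; exact hφ
  have hφΦ : φ ∈ Φ := by rw [hΦ]; exact InCl.sub hφcl (Subf.C (Subf.refl φ))
  have hboxΦ : Formula.box θ (Formula.K (Chain.last θ) (Formula.C θ φ)) ∈ Φ := by
    rw [hΦ]; exact InCl.CboxKC hφcl
  -- the two key propagation facts, by cases on well-formedness of φ
  have key : (∀ X Y, Formula.C θ φ ∈ X → X ∈ WL Θ Φ Λ → stepL Θ Φ Λ θ X Y →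
        Formula.C θ φ ∈ Y) ∧
      (∀ X, X ∈ WL Θ Φ Λ → Formula.C θ φ ∈ X → φ ∈ X) := by
    by_cases hwf : WF Θ φ
    · have hMIXwf : WF Θ ((Formula.C θ φ).imp
          (φ.and (Formula.box θ (Formula.K (Chain.last θ) (Formula.C θ φ))))) :=
        wf_imp.mpr ⟨⟨hθ, hwf⟩, ⟨hwf, hθ, hθ, hwf⟩⟩
      have hMIX := Provable.MIX (Θ := Θ) (θ := θ) (φ := φ) hMIXwf
      have himp1 := provable_imp_and_left hMIX
      have himp2 := provable_imp_and_right hMIX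
      constructor
      · intro X Y hCX hX hst
        have hboxX : Formula.box θ (Formula.K (Chain.last θ) (Formula.C θ φ)) ∈ X :=
          mcs_closed hX.1 hCX himp2 hboxΦ
        obtain ⟨U, hU, hbs, hss⟩ := hst.2.2
        exact hss _ (hbs _ hboxX)
      · intro X hX hCX
        exact mcs_closed hX.1 hCX himp1 hφΦ
    · have hnwfC : ¬ WF Θ (Formula.C θ φ) := fun h => hwf h.2
      constructor
      · intro X Y _ _ hst
        exact mcs_mem_not_wf hst.2.1.1 hφ hnwfC
      · intro X hX _
        exact mcs_mem_not_wf hX.1 hφΦ hwf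
  obtain ⟨hstep, hphi⟩ := key
  constructor
  · intro hC rest hch
    have main : ∀ rest (Γ' : Set (Formula P G)), Formula.C θ φ ∈ Γ' → Γ' ∈ WL Θ Φ Λ →
        List.Chain (stepL Θ Φ Λ θ) Γ' rest →
        ∀ X ∈ Γ' :: rest, Formula.C θ φ ∈ X ∧ X ∈ WL Θ Φ Λ := by
      intro rest
      induction rest with
      | nil =>
        intro Γ' h1 h2 _ X hX
        rw [List.mem_singleton] at hX
        subst hX
        exact ⟨h1, h2⟩
      | cons Y t ih =>
        intro Γ' h1 h2 hch X hX
        replace hch := List.isChain_cons_cons.mp hch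
        have hY : Y ∈ WL Θ Φ Λ := hch.1.2.1
        have hCY := hstep Γ' Y h1 h2 hch.1
        rcases List.mem_cons.mp hX with rfl | hX'
        · exact ⟨h1, h2⟩
        · exact ih Y hCY hY hch.2 X hX'
    have hall := main rest Γ hC hΓ hch
    exact ⟨fun X hX => hphi X (hall X hX).2 (hall X hX).1, fun X hX => (hall X hX).1⟩
  · intro h
    exact (h [] List.Chain.nil).2 Γ (List.mem_singleton.mpr rfl)

end ALPC
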